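/- The map φ : OX_n → T R(OX_n), α ↦ λ^α (the principal cone in the right ideal category), is injective: if α ≠ β in OX_n with ker α = ker β, then there exists an idempotent e ∈ OX_n such that α·e ≠ β·e, where e is constructed as follows: writing the common kernel partition as intervals A_1 < ... < A_k with α(A_i) = x_i, β(A_i) = y_i, take the least i with x_i ≠ y_i (say x_i < y_i) and define e(x) = x_i for x ≤ x_i and e(x) = x_k for x ≥ x_i + 1 (where x_k is the largest element of Im α); then e is an idempotent order-preserving transformation with α e ≠ β e. -/
import Mathlib

lemma aux_step (n : ℕ) (hn : 3 ≤ n) (a b : Fin n) (hab : a < b) :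
    ∃ e : Fin n → Fin n, Monotone e ∧ e ∘ e = e ∧ ¬ Function.Surjective e ∧
      (∃ c d : Fin n, ∀ x, e x = c ∨ e x = d) ∧ e a = a ∧ e b = b := by
  refine ⟨fun y => if y ≤ a then a else b, ?_, ?_, ?_, ⟨a, b, ?_⟩, ?_, ?_⟩
  · intro x y hxy
    by_cases hx : x ≤ a <;> by_cases hy : y ≤ a <;> simp [hx, hy]
    · exact le_of_lt hab
    · exact absurd (hxy.trans hy) hx
  · funext y
    by_cases hy : y ≤ a
    · simp only [Function.comp_apply, if_pos hy, if_pos le_rfl]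
    · simp only [Function.comp_apply, if_neg hy, if_neg (not_le.mpr hab)]
  · intro hs
    have hcard : ({a, b} : Finset (Fin n)).card < (Finset.univ : Finset (Fin n)).card := by
      have h1 : ({a, b} : Finset (Fin n)).card ≤ 2 :=
        (Finset.card_insert_le _ _).trans (by simp)
      have h2 : (Finset.univ : Finset (Fin n)).card = n := by simp
      omega
    have hns : ¬ (Finset.univ : Finset (Fin n)) ⊆ {a, b} := fun h =>
      absurd (Finset.card_le_card h) (not_le.mpr hcard)
    obtain ⟨z, _, hz⟩ := Finset.not_subset.mp hns
    obtain ⟨y, hy⟩ := hs z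
    by_cases h : y ≤ a <;> simp [h] at hy <;> simp [← hy] at hz
  · intro x
    by_cases hx : x ≤ a <;> simp [hx]
  · simp
  · simp [not_le.mpr hab]

/-- Injectivity of `α ↦ λ^α`: for order-preserving non-invertible `α ≠ β` on
`Fin n` with equal kernels there is an idempotent order-preserving
(non-invertible, two-valued) transformation `e` with `α · e ≠ β · e`
(composition left to right, so `α · e = fun x => e (α x)`). -/
theorem stmt19 (n : ℕ) (hn : 3 ≤ n) (α β : Fin n → Fin n)
    (hα : Monotone α) (hα' : ¬ Function.Surjective α)
    (hβ : Monotone β) (hβ' : ¬ Function.Surjective β)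
    (hker : ∀ x y, α x = α y ↔ β x = β y) (hne : α ≠ β) :
    ∃ e : Fin n → Fin n, Monotone e ∧ e ∘ e = e ∧ ¬ Function.Surjective e ∧
      (∃ c d : Fin n, ∀ x, e x = c ∨ e x = d) ∧
      (fun x => e (α x)) ≠ (fun x => e (β x)) := by
  obtain ⟨x, hx⟩ : ∃ x, α x ≠ β x := by
    by_contra h
    push_neg at h
    exact hne (funext h)
  rcases lt_or_gt_of_ne hx with h | h
  · obtain ⟨e, h1, h2, h3, h4, ha, hb⟩ := aux_step n hn (α x) (β x) h
    refine ⟨e, h1, h2, h3, h4, fun hc => ?_⟩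
    have := congrFun hc x
    simp only [ha, hb] at this
    exact hx this
  · obtain ⟨e, h1, h2, h3, h4, ha, hb⟩ := aux_step n hn (β x) (α x) h
    refine ⟨e, h1, h2, h3, h4, fun hc => ?_⟩
    have := congrFun hc x
    simp only [ha, hb] at this
    exact hx this
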